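/- Let n ≥ 1, let T be an n×n real row-stochastic matrix, let p ∈ (0,1), and set T_r := p·T·(I − (1−p)·T)⁻¹. Then the matrix p·I + (1−p)·T_r is invertible and (p·I + (1−p)·T_r)⁻¹·T_r = T. That is, the forward ('backward transformation' inversion) formula F_p(T_r) := (p·I + (1−p)·T_r)⁻¹·T_r recovers the original transition matrix T from T_r and p. -/

import Mathlib

/-- Let `T` be an `n × n` real row-stochastic matrix, `p ∈ (0,1)`, and
`T_r := p • T * (I - (1-p) • T)⁻¹`.  Then `p • I + (1-p) • T_r` is invertible and
`(p • I + (1-p) • T_r)⁻¹ * T_r = T`: the forward transformation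
`F_p(T_r) := (p • I + (1-p) • T_r)⁻¹ * T_r` recovers `T` from `T_r` and `p`. -/
theorem stmt3 (n : ℕ) (hn : 1 ≤ n) (T : Matrix (Fin n) (Fin n) ℝ)
    (hTnonneg : ∀ i j, 0 ≤ T i j) (hTrow : ∀ i, ∑ j, T i j = 1)
    (p : ℝ) (hp0 : 0 < p) (hp1 : p < 1) :
    IsUnit (p • (1 : Matrix (Fin n) (Fin n) ℝ)
        + (1 - p) • (p • (T * (1 - (1 - p) • T)⁻¹))) ∧
    (p • (1 : Matrix (Fin n) (Fin n) ℝ)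
        + (1 - p) • (p • (T * (1 - (1 - p) • T)⁻¹)))⁻¹
      * (p • (T * (1 - (1 - p) • T)⁻¹)) = T := by
  set A : Matrix (Fin n) (Fin n) ℝ := 1 - (1 - p) • T with hAdef
  have hq0 : 0 < 1 - p := by linarith
  have hTkk : ∀ k, T k k ≤ 1 := by
    intro k
    calc T k k ≤ ∑ j, T k j :=
          Finset.single_le_sum (fun j _ => hTnonneg k j) (Finset.mem_univ k)
      _ = 1 := hTrow k
  -- A is strictly diagonally dominant, hence invertible
  have hdet : A.det ≠ 0 := by
    apply det_ne_zero_of_sum_row_lt_diag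
    intro k
    have hAkk : A k k = 1 - (1 - p) * T k k := by
      simp [hAdef, Matrix.sub_apply, Matrix.one_apply, Matrix.smul_apply]
    have hoff : ∀ j, j ≠ k → ‖A k j‖ = (1 - p) * T k j := by
      intro j hj
      have : A k j = -((1 - p) * T k j) := by
        simp [hAdef, Matrix.sub_apply, Matrix.one_apply, Matrix.smul_apply, Ne.symm hj]
      rw [this, norm_neg, Real.norm_eq_abs, abs_of_nonneg (mul_nonneg hq0.le (hTnonneg k j))]
    have hsum : ∑ j ∈ Finset.univ.erase k, ‖A k j‖
        = (1 - p) * (1 - T k k) := by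
      rw [Finset.sum_congr rfl (fun j hj => hoff j (Finset.ne_of_mem_erase hj))]
      rw [← Finset.mul_sum]
      congr 1
      have := Finset.sum_erase_add Finset.univ (T k) (Finset.mem_univ k)
      have h1 := hTrow k
      linarith
    have hAkkpos : 0 < 1 - (1 - p) * T k k := by
      nlinarith [hTkk k, hTnonneg k k]
    rw [hsum, hAkk, Real.norm_eq_abs, abs_of_pos hAkkpos]
    nlinarith [hTnonneg k k]
  have hdetU : IsUnit A.det := isUnit_iff_ne_zero.mpr hdet
  have hAAi : A * A⁻¹ = 1 := Matrix.mul_nonsing_inv A hdetU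
  have hAiA : A⁻¹ * A = 1 := Matrix.nonsing_inv_mul A hdetU
  -- T commutes with A⁻¹
  have hTA : T * A = A * T := by
    simp [hAdef, Matrix.mul_sub, Matrix.sub_mul, Matrix.mul_smul, Matrix.smul_mul]
  have hcomm : T * A⁻¹ = A⁻¹ * T := by
    calc T * A⁻¹ = A⁻¹ * A * (T * A⁻¹) := by rw [hAiA, Matrix.one_mul]
      _ = A⁻¹ * (A * T * A⁻¹) := by simp only [Matrix.mul_assoc]
      _ = A⁻¹ * (T * (A * A⁻¹)) := by rw [← hTA]; simp only [Matrix.mul_assoc]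
      _ = A⁻¹ * T := by rw [hAAi, Matrix.mul_one]
  -- the key identity: M = p • A⁻¹
  set M : Matrix (Fin n) (Fin n) ℝ :=
    p • (1 : Matrix (Fin n) (Fin n) ℝ) + (1 - p) • (p • (T * A⁻¹)) with hMdef
  have hM : M = p • A⁻¹ := by
    have h1 : (p • A⁻¹ : Matrix (Fin n) (Fin n) ℝ)
        = p • ((A + (1 - p) • T) * A⁻¹) := by
      have : A + (1 - p) • T = 1 := by simp [hAdef]
      rw [this, Matrix.one_mul]
    rw [hMdef, h1, Matrix.add_mul, smul_add, Matrix.smul_mul, ← hAAi]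
    rw [smul_comm p (1 - p)]
  have hMinv : M⁻¹ = p⁻¹ • A := by
    apply Matrix.inv_eq_right_inv
    rw [hM, smul_mul_smul_comm, mul_inv_cancel₀ hp0.ne', hAiA, one_smul]
  have hMmul : M * (p⁻¹ • A) = 1 := by
    rw [hM, smul_mul_smul_comm, mul_inv_cancel₀ hp0.ne', hAiA, one_smul]
  constructor
  · rw [Matrix.isUnit_iff_isUnit_det]
    refine IsUnit.of_mul_eq_one (p⁻¹ • A).det ?_
    rw [← Matrix.det_mul, hMmul, Matrix.det_one]
  · rw [hMinv, smul_mul_smul_comm, inv_mul_cancel₀ hp0.ne', one_smul,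
      hcomm, ← Matrix.mul_assoc, hAAi, Matrix.one_mul]
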